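/- Let f : {0,1}^n → {0,1} with f(x) = 0 for some input x, and let B ⊆ [n] be a minimal sensitive block of x (f(x^B) = 1 but f(x^{B'}) = 0 for every proper subset B' ⊂ B). Then N(f) ≥ Ω(√|B|). -/

import Mathlib

open MvPolynomial

noncomputable section

/-- Real value of a Boolean. -/
def bval (b : Bool) : ℝ := if b then 1 else 0

/-- Evaluate a real multivariate polynomial at a Boolean point. -/
def evalB {ι : Type*} (p : MvPolynomial ι ℝ) (x : ι → Bool) : ℝ :=
  MvPolynomial.eval (fun i => bval (x i)) p

/-- `p` is an `ε`-approximate non-deterministic polynomial for `f`. -/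
def IsApproxNdet {ι : Type*} (ε : ℝ) (f : (ι → Bool) → Bool)
    (p : MvPolynomial ι ℝ) : Prop :=
  ∀ x, (f x = false → |evalB p x| ≤ ε) ∧ (f x = true → 1 ≤ |evalB p x|)

/-- The `ε`-approximate non-deterministic degree `N_ε(f)`. -/
def approxNdeg {ι : Type*} (ε : ℝ) (f : (ι → Bool) → Bool) : ℕ :=
  sInf {d | ∃ p : MvPolynomial ι ℝ, IsApproxNdet ε f p ∧ p.totalDegree ≤ d}

/-- `N(f) = N_{1/3}(f)`. -/
def N13 {ι : Type*} (f : (ι → Bool) → Bool) : ℕ := approxNdeg (1/3) f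

/-- `M(f) = max{N(f), N(¬f)}`. -/
def M13 {ι : Type*} (f : (ι → Bool) → Bool) : ℕ :=
  max (N13 f) (N13 fun x => !(f x))

/-- `p` sign-represents `f`. -/
def SignRep {ι : Type*} (p : MvPolynomial ι ℝ) (f : (ι → Bool) → Bool) : Prop :=
  ∀ x, evalB p x < 0 ↔ f x = true

/-- Sign degree (threshold degree). -/
def signDeg {ι : Type*} (f : (ι → Bool) → Bool) : ℕ :=
  sInf {d | ∃ p : MvPolynomial ι ℝ, SignRep p f ∧ p.totalDegree ≤ d}

/-- `1/3`-approximate degree. -/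
def approxDeg {ι : Type*} (f : (ι → Bool) → Bool) : ℕ :=
  sInf {d | ∃ p : MvPolynomial ι ℝ,
    (∀ x, |evalB p x - bval (f x)| ≤ 1/3) ∧ p.totalDegree ≤ d}

/-- Exact degree of a Boolean function. -/
def degB {ι : Type*} (f : (ι → Bool) → Bool) : ℕ :=
  sInf {d | ∃ p : MvPolynomial ι ℝ,
    (∀ x, evalB p x = bval (f x)) ∧ p.totalDegree ≤ d}

/-- Hamming weight. -/
def wt {ι : Type*} [Fintype ι] (x : ι → Bool) : ℕ :=
  (Finset.univ.filter fun i => x i = true).card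

/-- Flip the bits of `x` inside the block `B`. -/
def flipB {ι : Type*} [DecidableEq ι] (x : ι → Bool) (B : Finset ι) : ι → Bool :=
  fun i => if i ∈ B then !(x i) else x i

/-- Sensitivity of `f` at `x`. -/
def sensAt {ι : Type*} [Fintype ι] [DecidableEq ι]
    (f : (ι → Bool) → Bool) (x : ι → Bool) : ℕ :=
  (Finset.univ.filter fun i : ι => f (flipB x {i}) ≠ f x).card

/-- Sensitivity of `f`. -/
def sens {ι : Type*} [Fintype ι] [DecidableEq ι] (f : (ι → Bool) → Bool) : ℕ :=
  sSup {s | ∃ x, sensAt f x = s}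

/-- 0-sensitivity. -/
def sens₀ {ι : Type*} [Fintype ι] [DecidableEq ι] (f : (ι → Bool) → Bool) : ℕ :=
  sSup {s | ∃ x, f x = false ∧ sensAt f x = s}

/-- 1-sensitivity. -/
def sens₁ {ι : Type*} [Fintype ι] [DecidableEq ι] (f : (ι → Bool) → Bool) : ℕ :=
  sSup {s | ∃ x, f x = true ∧ sensAt f x = s}

/-- Block sensitivity of `f`. -/
def blockSens {ι : Type*} [Fintype ι] [DecidableEq ι] (f : (ι → Bool) → Bool) : ℕ :=
  sSup {k | ∃ x, ∃ B : Fin k → Finset ι,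
    (∀ i j, i ≠ j → Disjoint (B i) (B j)) ∧ ∀ i, f (flipB x (B i)) ≠ f x}

/-- `S` is a certificate for `f` at `x`. -/
def IsCert {ι : Type*} (f : (ι → Bool) → Bool) (x : ι → Bool) (S : Finset ι) : Prop :=
  ∀ y, (∀ i ∈ S, y i = x i) → f y = f x

/-- Certificate complexity at `x`. -/
def certAt {ι : Type*} (f : (ι → Bool) → Bool) (x : ι → Bool) : ℕ :=
  sInf {c | ∃ S : Finset ι, IsCert f x S ∧ S.card ≤ c}

/-- Certificate complexity of `f`. -/
def cert {ι : Type*} (f : (ι → Bool) → Bool) : ℕ :=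
  sSup {c | ∃ x, certAt f x = c}

/-- Deterministic decision trees querying variables indexed by `ι`. -/
inductive DTree (ι : Type*) where
  | leaf : Bool → DTree ι
  | node : ι → DTree ι → DTree ι → DTree ι

def DTree.evalT {ι : Type*} : DTree ι → (ι → Bool) → Bool
  | .leaf b, _ => b
  | .node i t0 t1, x => if x i then t1.evalT x else t0.evalT x

def DTree.depth {ι : Type*} : DTree ι → ℕ
  | .leaf _ => 0
  | .node _ t0 t1 => 1 + max t0.depth t1.depth

/-- Deterministic query complexity `D(f)`. -/
def Dquery {ι : Type*} (f : (ι → Bool) → Bool) : ℕ :=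
  sInf {d | ∃ t : DTree ι, (∀ x, t.evalT x = f x) ∧ t.depth ≤ d}

/-- `P` is a monotone path from `0^n` to `1^n`. -/
def IsMonoPath {ι : Type*} [Fintype ι] [DecidableEq ι] (P : ℕ → ι → Bool) : Prop :=
  P 0 = (fun _ => false) ∧ P (Fintype.card ι) = (fun _ => true) ∧
  ∀ t < Fintype.card ι, ∃ j, P t j = false ∧ P (t + 1) = Function.update (P t) j true

/-- Alternation number of `f` along the path `P`. -/
def pathAlt {ι : Type*} [Fintype ι] (f : (ι → Bool) → Bool) (P : ℕ → ι → Bool) : ℕ :=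
  ((Finset.range (Fintype.card ι)).filter fun t => f (P t) ≠ f (P (t + 1))).card

/-- Alternation number of `f`. -/
def altNum {ι : Type*} [Fintype ι] [DecidableEq ι] (f : (ι → Bool) → Bool) : ℕ :=
  sSup {a | ∃ P, IsMonoPath P ∧ pathAlt f P = a}

/-- Zebra function: all monotone paths have the same alternation number. -/
def IsZebra {ι : Type*} [Fintype ι] [DecidableEq ι] (f : (ι → Bool) → Bool) : Prop :=
  ∀ P Q, IsMonoPath P → IsMonoPath Q → pathAlt f P = pathAlt f Q

/-- Symmetric Boolean function. -/
def IsSymmF {ι : Type*} [Fintype ι] (f : (ι → Bool) → Bool) : Prop :=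
  ∀ x y, wt x = wt y → f x = f y

/-- Monotonically increasing. -/
def MonoIncr {ι : Type*} (f : (ι → Bool) → Bool) : Prop :=
  ∀ x y : ι → Bool, (∀ i, x i = true → y i = true) → f x = true → f y = true

/-- Monotonically decreasing. -/
def MonoDecr {ι : Type*} (f : (ι → Bool) → Bool) : Prop :=
  ∀ x y : ι → Bool, (∀ i, x i = true → y i = true) → f y = true → f x = true

/-- Monotone (increasing or decreasing). -/
def Monot {ι : Type*} (f : (ι → Bool) → Bool) : Prop := MonoIncr f ∨ MonoDecr f

/-- Non-constant. -/
def NonConst {ι : Type*} (f : (ι → Bool) → Bool) : Prop := ∃ x y, f x ≠ f y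

end

namespace Stmt16Aux

section Cheb
open Polynomial Real

lemma natDegree_T_le : ∀ n : ℕ, (Polynomial.Chebyshev.T ℝ (n : ℤ)).natDegree ≤ n := by
  intro n
  induction n using Nat.strong_induction_on with
  | _ n ih =>
    match n with
    | 0 => simp [Polynomial.Chebyshev.T_zero]
    | 1 => simpa [Polynomial.Chebyshev.T_one] using Polynomial.natDegree_X_le
    | (k+2) =>
      have hcast : ((k+2 : ℕ) : ℤ) = (k : ℤ) + 2 := by push_cast; ring
      rw [hcast, Polynomial.Chebyshev.T_add_two]
      refine (Polynomial.natDegree_sub_le _ _).trans ?_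
      have h1 : (2 * Polynomial.X * Polynomial.Chebyshev.T ℝ ((k:ℤ) + 1)).natDegree ≤ k + 2 := by
        refine (Polynomial.natDegree_mul_le).trans ?_
        have h2 : (2 * Polynomial.X : ℝ[X]).natDegree ≤ 1 := by
          refine (Polynomial.natDegree_mul_le).trans ?_
          simp
        have h3 : (Polynomial.Chebyshev.T ℝ ((k:ℤ) + 1)).natDegree ≤ k + 1 := by
          have := ih (k+1) (by omega)
          rwa [show ((k+1 : ℕ) : ℤ) = (k:ℤ)+1 by push_cast; ring] at this
        omega
      have h4 : (Polynomial.Chebyshev.T ℝ (k:ℤ)).natDegree ≤ k := ih k (by omega)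
      simp only [max_le_iff]
      exact ⟨h1, h4.trans (by omega)⟩

lemma T_eval_cosh (n : ℕ) (u : ℝ) :
    (Polynomial.Chebyshev.T ℝ (n : ℤ)).eval (Real.cosh u) = Real.cosh (n * u) := by
  have h := Polynomial.Chebyshev.T_complex_cos ((u : ℂ) * Complex.I) (n : ℤ)
  apply Complex.ofReal_inj.mp
  rw [Polynomial.Chebyshev.complex_ofReal_eval_T, Complex.ofReal_cosh, ← Complex.cos_mul_I, h]
  have : ((n : ℤ) : ℂ) * ((u : ℂ) * Complex.I) = ((n * u : ℝ) : ℂ) * Complex.I := by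
    push_cast; ring
  rw [this, Complex.cos_mul_I, ← Complex.ofReal_cosh]

lemma cos_nat_mul_pi (n : ℕ) : Real.cos (n * Real.pi) = (-1 : ℝ) ^ n := by
  induction n with
  | zero => simp
  | succ k ih =>
    have : ((k+1 : ℕ) : ℝ) * Real.pi = k * Real.pi + Real.pi := by push_cast; ring
    rw [this, Real.cos_add_pi, ih]
    ring


lemma cheb_bound (D : ℕ) (hD : 1 ≤ D) (g : ℝ[X]) (hdeg : g.natDegree ≤ D) (M : ℝ)
    (hM : ∀ t : ℝ, -1 ≤ t → t ≤ 1 → |g.eval t| ≤ M)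
    (y u : ℝ) (hy : 1 < y) (hyu : y ≤ Real.cosh u) :
    |g.eval y| ≤ M * Real.cosh (D * u) := by
  have hM0 : 0 ≤ M := (abs_nonneg _).trans (hM 0 (by norm_num) (by norm_num))
  have hDR : (0:ℝ) < D := by exact_mod_cast hD
  set v : Fin (D+1) → ℝ := fun j => Real.cos (j * Real.pi / D) with hv
  have hanti : ∀ {j k : Fin (D+1)}, j < k → v k < v j := by
    intro j k hjk
    apply Real.cos_lt_cos_of_nonneg_of_le_pi
    · positivity
    · rw [div_le_iff₀ hDR]
      have : (k : ℝ) ≤ D := by exact_mod_cast Fin.is_le k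
      nlinarith [Real.pi_pos]
    · have h1 : (j : ℝ) < (k : ℝ) := by exact_mod_cast hjk
      have hπ := Real.pi_pos
      gcongr
  have hinj : Set.InjOn v ↑(Finset.univ : Finset (Fin (D+1))) := by
    intro j _ k _ h
    by_contra hne
    rcases lt_or_gt_of_ne hne with hlt | hlt
    · exact absurd h.symm (ne_of_lt (hanti hlt))
    · exact absurd h (ne_of_lt (hanti hlt))
  have hvle : ∀ k, v k ≤ 1 := fun k => Real.cos_le_one _
  have hvge : ∀ k, -1 ≤ v k := fun k => Real.neg_one_le_cos _
  have hvlt : ∀ k, v k < y := fun k => lt_of_le_of_lt (hvle k) hy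
  set Bb : Fin (D+1) → ℝ → ℝ := fun j t => (Lagrange.basis Finset.univ v j).eval t with hBb
  have hcard : (Finset.univ : Finset (Fin (D+1))).card = D + 1 := by simp
  have interp : ∀ f : ℝ[X], f.natDegree ≤ D → ∀ t : ℝ,
      f.eval t = ∑ j, f.eval (v j) * Bb j t := by
    intro f hf t
    have hdlt : f.degree < ((Finset.univ : Finset (Fin (D+1))).card : ℕ) := by
      rw [hcard]
      exact lt_of_le_of_lt Polynomial.degree_le_natDegree
        (by exact_mod_cast Nat.lt_succ_of_le hf)
    conv_lhs => rw [Lagrange.eq_interpolate hinj hdlt]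
    rw [Lagrange.interpolate_apply]
    rw [Polynomial.eval_finset_sum]
    exact Finset.sum_congr rfl (fun j _ => by rw [Polynomial.eval_mul, Polynomial.eval_C])
  have Bform : ∀ (j : Fin (D+1)) (t : ℝ),
      Bb j t = (∏ k ∈ Finset.univ.erase j, (v j - v k)⁻¹) *
               (∏ k ∈ Finset.univ.erase j, (t - v k)) := by
    intro j t
    rw [hBb]
    simp only [Lagrange.basis, Polynomial.eval_prod, Lagrange.basisDivisor,
      Polynomial.eval_mul, Polynomial.eval_C, Polynomial.eval_sub, Polynomial.eval_X]
    rw [← Finset.prod_mul_distrib]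
  -- sign of the denominator product
  have hQ : ∀ j : Fin (D+1), ∃ R : ℝ, 0 < R ∧
      (∏ k ∈ Finset.univ.erase j, (v j - v k)) = (-1 : ℝ)^(j : ℕ) * R := by
    intro j
    rw [← Finset.prod_filter_mul_prod_filter_not (Finset.univ.erase j) (· < j)]
    have hfilt : (Finset.univ.erase j).filter (· < j) = Finset.Iio j := by
      ext k
      constructor
      · intro h
        simp only [Finset.mem_filter] at h
        simpa using h.2
      · intro h
        simp only [Finset.mem_Iio] at h
        simp only [Finset.mem_filter, Finset.mem_erase, Finset.mem_univ, and_true, true_and]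
        exact ⟨ne_of_lt h, h⟩
    have hneg : (∏ k ∈ (Finset.univ.erase j).filter (· < j), (v j - v k))
        = (-1 : ℝ)^(j:ℕ) * ∏ k ∈ (Finset.univ.erase j).filter (· < j), (v k - v j) := by
      have e1 : (∏ k ∈ (Finset.univ.erase j).filter (· < j), (v j - v k))
          = ∏ k ∈ (Finset.univ.erase j).filter (· < j), ((-1 : ℝ) * (v k - v j)) :=
        Finset.prod_congr rfl (fun k _ => by ring)
      rw [e1, Finset.prod_mul_distrib, Finset.prod_const, hfilt, Fin.card_Iio]
    refine ⟨(∏ k ∈ (Finset.univ.erase j).filter (· < j), (v k - v j)) *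
      (∏ k ∈ (Finset.univ.erase j).filter (fun k => ¬ k < j), (v j - v k)), ?_, ?_⟩
    · apply mul_pos
      · apply Finset.prod_pos
        intro k hk
        rw [hfilt, Finset.mem_Iio] at hk
        linarith [hanti hk]
      · apply Finset.prod_pos
        intro k hk
        simp only [Finset.mem_filter, Finset.mem_erase, Finset.mem_univ] at hk
        have hjk : j < k := by
          rcases lt_or_gt_of_ne (Ne.symm hk.1.1) with h | h
          · exact h
          · exact absurd h hk.2
        linarith [hanti hjk]
    · rw [hneg]; ring
  -- nonnegativity and monotonicity of signed basis values
  have hsq : ∀ j : Fin (D+1), (-1:ℝ)^(j:ℕ) * (-1:ℝ)^(j:ℕ) = 1 := by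
    intro j
    rcases Nat.even_or_odd (j:ℕ) with h | h
    · rw [h.neg_one_pow]; norm_num
    · rw [h.neg_one_pow]; norm_num
  have hKsign : ∀ j : Fin (D+1),
      0 ≤ (-1:ℝ)^(j:ℕ) * ∏ k ∈ Finset.univ.erase j, (v j - v k)⁻¹ := by
    intro j
    obtain ⟨R, hR, hQR⟩ := hQ j
    rw [Finset.prod_inv_distrib, hQR]
    rw [mul_inv, ← mul_assoc]
    have : ((-1:ℝ)^(j:ℕ))⁻¹ = (-1:ℝ)^(j:ℕ) := by
      rcases Nat.even_or_odd (j:ℕ) with h | h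
      · rw [h.neg_one_pow]; norm_num
      · rw [h.neg_one_pow]; norm_num
    rw [this, hsq j, one_mul]
    positivity
  have hPnn : ∀ (j : Fin (D+1)) (t : ℝ), 1 ≤ t →
      0 ≤ ∏ k ∈ Finset.univ.erase j, (t - v k) := by
    intro j t ht
    apply Finset.prod_nonneg
    intro k _
    have := hvle k
    linarith
  have hBnn : ∀ (j : Fin (D+1)) (t : ℝ), 1 ≤ t → 0 ≤ (-1:ℝ)^(j:ℕ) * Bb j t := by
    intro j t ht
    rw [Bform, ← mul_assoc]
    exact mul_nonneg (hKsign j) (hPnn j t ht)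
  have hBmono : ∀ (j : Fin (D+1)) (t t' : ℝ), 1 ≤ t → t ≤ t' →
      (-1:ℝ)^(j:ℕ) * Bb j t ≤ (-1:ℝ)^(j:ℕ) * Bb j t' := by
    intro j t t' ht htt
    rw [Bform, Bform, ← mul_assoc, ← mul_assoc]
    apply mul_le_mul_of_nonneg_left _ (hKsign j)
    apply Finset.prod_le_prod
    · intro k _; have := hvle k; linarith
    · intro k _; linarith
  -- T ℝ D eval formula
  have hTval : ∀ t : ℝ, (Polynomial.Chebyshev.T ℝ (D:ℤ)).eval t
      = ∑ j : Fin (D+1), (-1:ℝ)^(j:ℕ) * Bb j t := by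
    intro t
    rw [interp _ (natDegree_T_le D) t]
    apply Finset.sum_congr rfl
    intro j _
    congr 1
    show (Polynomial.Chebyshev.T ℝ (D:ℤ)).eval (Real.cos ((j:ℕ) * Real.pi / D)) = _
    rw [Polynomial.Chebyshev.T_real_cos]
    have : ((D:ℤ):ℝ) * ((j:ℕ) * Real.pi / D) = (j:ℕ) * Real.pi := by
      field_simp
      push_cast; ring
    rw [this, cos_nat_mul_pi]
  -- main chain
  have hgy : g.eval y = ∑ j, g.eval (v j) * Bb j y := interp g hdeg y
  have h1 : |g.eval y| ≤ ∑ j : Fin (D+1), M * ((-1:ℝ)^(j:ℕ) * Bb j y) := by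
    rw [hgy]
    refine (Finset.abs_sum_le_sum_abs _ _).trans ?_
    apply Finset.sum_le_sum
    intro j _
    rw [abs_mul]
    have habs : |Bb j y| = (-1:ℝ)^(j:ℕ) * Bb j y := by
      have h2 : |Bb j y| = |(-1:ℝ)^(j:ℕ) * Bb j y| := by
        rw [abs_mul, abs_pow, abs_neg, abs_one, one_pow, one_mul]
      rw [h2, abs_of_nonneg (hBnn j y (le_of_lt hy))]
    rw [habs]
    apply mul_le_mul_of_nonneg_right _ (hBnn j y (le_of_lt hy))
    exact hM (v j) (hvge j) (hvle j)
  have h2 : ∑ j : Fin (D+1), M * ((-1:ℝ)^(j:ℕ) * Bb j y) = M * (Polynomial.Chebyshev.T ℝ (D:ℤ)).eval y := by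
    rw [hTval, Finset.mul_sum]
  have h3 : (Polynomial.Chebyshev.T ℝ (D:ℤ)).eval y
      ≤ (Polynomial.Chebyshev.T ℝ (D:ℤ)).eval (Real.cosh u) := by
    rw [hTval, hTval]
    apply Finset.sum_le_sum
    intro j _
    exact hBmono j y (Real.cosh u) (le_of_lt hy) hyu
  calc |g.eval y| ≤ M * (Polynomial.Chebyshev.T ℝ (D:ℤ)).eval y := by rw [← h2]; exact h1
    _ ≤ M * (Polynomial.Chebyshev.T ℝ (D:ℤ)).eval (Real.cosh u) :=
        mul_le_mul_of_nonneg_left h3 hM0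
    _ = M * Real.cosh (D * u) := by rw [T_eval_cosh]

end Cheb

section Mv
open MvPolynomial
variable {n : ℕ}

lemma bval_pow (b : Bool) (k : ℕ) (hk : k ≠ 0) : bval b ^ k = bval b := by
  cases b <;> simp [bval, zero_pow hk]

lemma ndet_set_nonempty (f : (Fin n → Bool) → Bool) :
    {d | ∃ p : MvPolynomial (Fin n) ℝ, IsApproxNdet (1/3) f p ∧ p.totalDegree ≤ d}.Nonempty := by
  classical
  set P : MvPolynomial (Fin n) ℝ :=
    ∑ y ∈ Finset.univ.filter (fun y => f y = true),
      ∏ i, (if y i then (X i : MvPolynomial (Fin n) ℝ) else 1 - X i) with hP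
  have hev : ∀ z, evalB P z = bval (f z) := by
    intro z
    rw [evalB, hP, map_sum]
    have hterm : ∀ y : Fin n → Bool,
        (MvPolynomial.eval (fun i => bval (z i)))
          (∏ i, (if y i then (X i : MvPolynomial (Fin n) ℝ) else 1 - X i))
        = if y = z then (1:ℝ) else 0 := by
      intro y
      rw [map_prod]
      by_cases h : y = z
      · subst h
        rw [if_pos rfl]
        apply Finset.prod_eq_one
        intro i _
        cases hyi : y i <;> simp [hyi, bval]
      · rw [if_neg h]
        obtain ⟨i, hi⟩ : ∃ i, y i ≠ z i := by
          by_contra hc; push_neg at hc; exact h (funext hc)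
        apply Finset.prod_eq_zero (Finset.mem_univ i)
        cases hyi : y i <;> cases hzi : z i <;> simp_all [bval]
    rw [Finset.sum_congr rfl (fun y _ => hterm y)]
    rw [Finset.sum_ite_eq' _ z (fun _ => (1:ℝ))]
    by_cases hz : f z = true <;> simp [hz, bval]
  exact ⟨P.totalDegree, P, fun x => ⟨fun hx => by rw [hev x, hx]; norm_num [bval],
    fun hx => by rw [hev x, hx]; norm_num [bval]⟩, le_refl _⟩

noncomputable def mlExp (s : Fin n →₀ ℕ) : Fin n →₀ ℕ := Finsupp.mapRange (fun e => min e 1) (by simp) s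

lemma mlExp_apply (s : Fin n →₀ ℕ) (i : Fin n) : mlExp s i = min (s i) 1 := rfl

lemma mlExp_support (s : Fin n →₀ ℕ) : (mlExp s).support = s.support := by
  ext i
  simp only [Finsupp.mem_support_iff, mlExp_apply]
  omega

noncomputable def ml (p : MvPolynomial (Fin n) ℝ) : MvPolynomial (Fin n) ℝ :=
  ∑ s ∈ p.support, monomial (mlExp s) (coeff s p)

lemma evalB_ml (p : MvPolynomial (Fin n) ℝ) (z : Fin n → Bool) :
    evalB (ml p) z = evalB p z := by
  rw [evalB, evalB, ml, map_sum, MvPolynomial.eval_eq (fun i => bval (z i)) p]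
  apply Finset.sum_congr rfl
  intro s hs
  rw [eval_monomial]
  congr 1
  rw [Finsupp.prod, mlExp_support]
  apply Finset.prod_congr rfl
  intro i hi
  have hsi : s i ≠ 0 := Finsupp.mem_support_iff.mp hi
  rw [mlExp_apply, bval_pow _ _ (by omega), bval_pow _ _ hsi]

lemma totalDegree_ml_le (p : MvPolynomial (Fin n) ℝ) : (ml p).totalDegree ≤ p.totalDegree := by
  refine (MvPolynomial.totalDegree_finset_sum _ _).trans ?_
  apply Finset.sup_le
  intro s hs
  refine (MvPolynomial.totalDegree_monomial_le _ _).trans ?_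
  refine le_trans ?_ (MvPolynomial.le_totalDegree hs)
  rw [Finsupp.sum, Finsupp.sum, mlExp_support]
  exact Finset.sum_le_sum (fun i _ => by rw [mlExp_apply]; exact min_le_left _ _)

lemma ml_support_le (p : MvPolynomial (Fin n) ℝ) :
    ∀ d ∈ (ml p).support, ∀ i, d i ≤ 1 := by
  intro d hd i
  by_contra h
  push_neg at h
  rw [MvPolynomial.mem_support_iff] at hd
  apply hd
  rw [ml, MvPolynomial.coeff_sum]
  apply Finset.sum_eq_zero
  intro s _
  rw [MvPolynomial.coeff_monomial, if_neg]
  intro he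
  have := congrFun (congrArg (fun (g : Fin n →₀ ℕ) => (g : Fin n → ℕ)) he) i
  simp only [mlExp_apply] at this
  omega


lemma eval_update_affine (q : MvPolynomial (Fin n) ℝ) (i : Fin n)
    (hq : ∀ d ∈ q.support, d i ≤ 1) (v : Fin n → ℝ) (t : ℝ) :
    MvPolynomial.eval (Function.update v i t) q
      = (1 - t) * MvPolynomial.eval (Function.update v i 0) q
        + t * MvPolynomial.eval (Function.update v i 1) q := by
  rw [MvPolynomial.eval_eq, MvPolynomial.eval_eq, MvPolynomial.eval_eq,
    Finset.mul_sum, Finset.mul_sum, ← Finset.sum_add_distrib]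
  apply Finset.sum_congr rfl
  intro d hd
  by_cases hi : i ∈ d.support
  · have h1 : d i = 1 := by
      have h2 := Finsupp.mem_support_iff.mp hi
      have := hq d hd
      omega
    have key : ∀ a : ℝ, (∏ j ∈ d.support, Function.update v i a j ^ d j)
        = a * ∏ j ∈ d.support.erase i, v j ^ d j := by
      intro a
      rw [← Finset.mul_prod_erase _ _ hi]
      congr 1
      · rw [Function.update_self, h1, pow_one]
      · exact Finset.prod_congr rfl fun j hj => by
          rw [Function.update_of_ne (Finset.ne_of_mem_erase hj)]
    rw [key, key, key]; ring
  · have key : ∀ a : ℝ, (∏ j ∈ d.support, Function.update v i a j ^ d j)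
        = ∏ j ∈ d.support, v j ^ d j := by
      intro a
      refine Finset.prod_congr rfl fun j hj => ?_
      rw [Function.update_of_ne (by rintro rfl; exact hi hj)]
    rw [key, key, key]; ring

/-- the point interpolating between `y` and its block-flip. -/
def mixPt (Bs : Finset (Fin n)) (y : Fin n → Bool) (t : ℝ) : Fin n → ℝ :=
  fun i => if i ∈ Bs then (1 - t) * bval (y i) + t * bval (!(y i)) else bval (y i)

lemma flipB_empty (y : Fin n → Bool) : flipB y ∅ = y := by
  funext i; simp [flipB]

lemma flipB_insert (y : Fin n → Bool) (i : Fin n) (S : Finset (Fin n)) (hiS : i ∉ S) :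
    flipB (flipB y {i}) S = flipB y (insert i S) := by
  funext j
  by_cases hj : j = i
  · subst hj; simp [flipB, hiS]
  · by_cases hjS : j ∈ S <;> simp [flipB, hj, hjS, Finset.mem_insert]

lemma expect_eq (q : MvPolynomial (Fin n) ℝ) (hq : ∀ d ∈ q.support, ∀ i, d i ≤ 1) (t : ℝ) :
    ∀ (Bs : Finset (Fin n)) (y : Fin n → Bool),
      MvPolynomial.eval (mixPt Bs y t) q
        = ∑ S ∈ Bs.powerset,
            t ^ S.card * (1 - t) ^ (Bs.card - S.card) * evalB q (flipB y S) := by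
  intro Bs
  induction Bs using Finset.induction_on with
  | empty =>
    intro y
    have h0 : mixPt ∅ y t = fun i => bval (y i) := by funext i; simp [mixPt]
    simp [h0, flipB_empty, evalB]
  | insert i Bs hiB ih =>
    intro y
    -- LHS decomposition via affinity
    have hupd : mixPt (insert i Bs) y t
        = Function.update (mixPt Bs y t) i ((1 - t) * bval (y i) + t * bval (!(y i))) := by
      funext j
      by_cases hj : j = i
      · subst hj; simp [mixPt, Function.update_self]
      · rw [Function.update_of_ne hj]
        simp [mixPt, hj, Finset.mem_insert]
    have hupd0 : ∀ b : Bool, Function.update (mixPt Bs y t) i (bval b)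
        = mixPt Bs (Function.update y i b) t := by
      intro b
      funext j
      by_cases hj : j = i
      · subst hj; simp [Function.update_self, mixPt, hiB]
      · rw [Function.update_of_ne hj]
        simp only [mixPt, Function.update_of_ne hj]
    have hflip : flipB y {i} = Function.update y i (!(y i)) := by
      funext j
      by_cases hj : j = i
      · subst hj; simp [flipB]
      · simp [flipB, hj, Function.update_of_ne hj]
    have main : MvPolynomial.eval (mixPt (insert i Bs) y t) q
        = (1 - t) * MvPolynomial.eval (mixPt Bs y t) q
          + t * MvPolynomial.eval (mixPt Bs (flipB y {i}) t) q := by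
      rw [hupd, eval_update_affine q i (fun d hd => hq d hd i)]
      have e0 : Function.update (mixPt Bs y t) i (0:ℝ)
          = mixPt Bs (Function.update y i false) t := by
        have := hupd0 false; simpa [bval] using this
      have e1 : Function.update (mixPt Bs y t) i (1:ℝ)
          = mixPt Bs (Function.update y i true) t := by
        have := hupd0 true; simpa [bval] using this
      rw [e0, e1, hflip]
      cases hyi : y i
      · have hy0 : Function.update y i false = y := by
          funext j; by_cases hj : j = i
          · subst hj; simp [hyi]
          · simp [Function.update_of_ne hj]
        rw [hy0]
        simp [bval]
      · have hy1 : Function.update y i true = y := by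
          funext j; by_cases hj : j = i
          · subst hj; simp [hyi]
          · simp [Function.update_of_ne hj]
        rw [hy1]
        simp [bval]
        ring
    rw [main, ih y, ih (flipB y {i})]
    rw [Finset.sum_powerset_insert hiB]
    rw [Finset.mul_sum, Finset.mul_sum]
    congr 1
    · apply Finset.sum_congr rfl
      intro S hS
      have hSB : S ⊆ Bs := Finset.mem_powerset.mp hS
      have hcard : S.card ≤ Bs.card := Finset.card_le_card hSB
      rw [Finset.card_insert_of_notMem hiB]
      have : Bs.card + 1 - S.card = (Bs.card - S.card) + 1 := by omega
      rw [this, pow_succ]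
      ring
    · apply Finset.sum_congr rfl
      intro S hS
      have hSB : S ⊆ Bs := Finset.mem_powerset.mp hS
      have hiS : i ∉ S := fun hc => hiB (hSB hc)
      have hcard : S.card ≤ Bs.card := Finset.card_le_card hSB
      rw [Finset.card_insert_of_notMem hiB, Finset.card_insert_of_notMem hiS]
      have : Bs.card + 1 - (S.card + 1) = Bs.card - S.card := by omega
      rw [this, flipB_insert y i S hiS, pow_succ]
      ring


end Mv

section Sub
open Polynomial
variable {n : ℕ}

/-- substitution sending block variables to a line. -/
noncomputable def subst (Bs : Finset (Fin n)) (x : Fin n → Bool) : Fin n → Polynomial ℝ :=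
  fun i => if i ∈ Bs then Polynomial.C (bval (x i)) * (1 - Polynomial.X)
    + Polynomial.X * Polynomial.C (bval (!(x i))) else Polynomial.C (bval (x i))

lemma subst_natDegree_le (Bs : Finset (Fin n)) (x : Fin n → Bool) (i : Fin n) :
    (subst Bs x i).natDegree ≤ 1 := by
  rw [subst]
  by_cases hi : i ∈ Bs
  · rw [if_pos hi]
    refine (Polynomial.natDegree_add_le _ _).trans ?_
    simp only [max_le_iff]
    constructor
    · refine (Polynomial.natDegree_mul_le).trans ?_
      have h1 : (1 - Polynomial.X : Polynomial ℝ).natDegree ≤ 1 := by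
        refine (Polynomial.natDegree_sub_le _ _).trans ?_
        simp [Polynomial.natDegree_one, Polynomial.natDegree_X]
      simp [Polynomial.natDegree_C]
      omega
    · refine (Polynomial.natDegree_mul_le).trans ?_
      simp [Polynomial.natDegree_C, Polynomial.natDegree_X]
  · rw [if_neg hi]; simp [Polynomial.natDegree_C]

lemma eval_subst (Bs : Finset (Fin n)) (x : Fin n → Bool)
    (q : MvPolynomial (Fin n) ℝ) (t : ℝ) :
    (MvPolynomial.aeval (subst Bs x) q).eval t
      = MvPolynomial.eval (mixPt Bs x t) q := by
  have h := MvPolynomial.comp_aeval (subst Bs x) (Polynomial.aeval t : Polynomial ℝ →ₐ[ℝ] ℝ)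
  have h2 := AlgHom.congr_fun h q
  simp only [AlgHom.coe_comp, Function.comp_apply] at h2
  have h3 : (Polynomial.aeval t : Polynomial ℝ →ₐ[ℝ] ℝ) (MvPolynomial.aeval (subst Bs x) q)
      = (MvPolynomial.aeval (subst Bs x) q).eval t := by
    rw [Polynomial.coe_aeval_eq_eval]
  rw [← h3, h2]
  have h4 : (MvPolynomial.aeval (fun i => (Polynomial.aeval t) (subst Bs x i)) q)
      = MvPolynomial.eval (fun i => (Polynomial.aeval t) (subst Bs x i)) q := by
    rw [MvPolynomial.aeval_def, MvPolynomial.eval]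
    rfl
  rw [h4]
  have h5 : (fun i => (Polynomial.aeval t) (subst Bs x i)) = mixPt Bs x t := by
    funext i
    rw [subst, mixPt]
    by_cases hi : i ∈ Bs
    · rw [if_pos hi, if_pos hi]
      simp only [map_add, map_mul, Polynomial.aeval_X, map_sub, map_one, Polynomial.aeval_C]
      have halg : ∀ z : ℝ, (algebraMap ℝ ℝ) z = z := fun z => rfl
      rw [halg, halg]
      ring
    · rw [if_neg hi, if_neg hi]
      simp [Polynomial.aeval_C]
  rw [h5]

lemma natDegree_aeval_le (σ : Fin n → Polynomial ℝ) (hσ : ∀ i, (σ i).natDegree ≤ 1)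
    (q : MvPolynomial (Fin n) ℝ) :
    (MvPolynomial.aeval σ q).natDegree ≤ q.totalDegree := by
  rw [MvPolynomial.aeval_def, MvPolynomial.eval₂_eq]
  refine (Polynomial.natDegree_sum_le _ _).trans ?_
  rw [Finset.fold_max_le]
  constructor
  · exact Nat.zero_le _
  intro d hd
  refine (Polynomial.natDegree_mul_le).trans ?_
  have h1 : ((algebraMap ℝ (Polynomial ℝ)) (MvPolynomial.coeff d q)).natDegree = 0 := by
    simp [Polynomial.natDegree_C]
  rw [h1, zero_add]
  refine (Polynomial.natDegree_prod_le _ _).trans ?_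
  refine le_trans ?_ (MvPolynomial.le_totalDegree hd)
  rw [Finsupp.sum]
  apply Finset.sum_le_sum
  intro i _
  refine (Polynomial.natDegree_pow_le).trans ?_
  have := hσ i
  calc d i * (σ i).natDegree ≤ d i * 1 := Nat.mul_le_mul_left _ (hσ i)
    _ = d i := by omega

lemma cosh_quad {u : ℝ} (hu : 0 ≤ u) : 1 + u^2/2 ≤ Real.cosh u := by
  have h1 : Real.cosh u = Real.cosh (2 * (u/2)) := by congr 1; ring
  rw [h1, Real.cosh_two_mul]
  have h2 : Real.cosh (u/2)^2 = Real.sinh (u/2)^2 + 1 := Real.cosh_sq _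
  have h3 : u/2 ≤ Real.sinh (u/2) := Real.self_le_sinh_iff.mpr (by linarith)
  nlinarith [Real.sinh_nonneg_iff.mpr (show (0:ℝ) ≤ u/2 by linarith)]

lemma cosh_le_exp {z : ℝ} (hz : 0 ≤ z) : Real.cosh z ≤ Real.exp z := by
  rw [Real.cosh_eq]
  have : Real.exp (-z) ≤ Real.exp z := Real.exp_le_exp.mpr (by linarith)
  linarith

lemma exp_fifth : Real.exp (1/5) ≤ 5/4 := by
  have h := Real.add_one_le_exp (-(1/5 : ℝ))
  rw [Real.exp_neg] at h
  have hp : 0 < Real.exp (1/5 : ℝ) := Real.exp_pos _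
  have h2 : (4/5 : ℝ) ≤ (Real.exp (1/5))⁻¹ := by linarith
  have h3 := (inv_le_inv₀ (by positivity) (by norm_num)).mpr h2
  simpa using h3.trans_eq (by norm_num)

lemma exp_neg_half : Real.exp (-(1/2 : ℝ)) < 7/10 := by
  have h1 : Real.exp (1/2 : ℝ) * Real.exp (1/2 : ℝ) = Real.exp 1 := by
    rw [← Real.exp_add]; norm_num
  have h2 : (2.7182818283 : ℝ) < Real.exp 1 := Real.exp_one_gt_d9
  have hp : 0 < Real.exp (1/2 : ℝ) := Real.exp_pos _
  have h3 : (10/7 : ℝ) < Real.exp (1/2) := by nlinarith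
  rw [Real.exp_neg]
  have := (inv_lt_inv₀ hp (by norm_num : (0:ℝ) < 10/7)).mpr h3
  calc (Real.exp (1/2 : ℝ))⁻¹ < (10/7 : ℝ)⁻¹ := this
    _ = 7/10 := by norm_num
  

end Sub

end Stmt16Aux

open Stmt16Aux

set_option maxHeartbeats 1000000

/-- if `B` is a minimal sensitive block of a `0`-input `x`,
then `N(f) ≥ Ω(√|B|)`. -/
theorem stmt16 :
    ∃ c : ℝ, 0 < c ∧
      ∀ (n : ℕ) (f : (Fin n → Bool) → Bool) (x : Fin n → Bool) (B : Finset (Fin n)),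
        f x = false → f (flipB x B) = true →
        (∀ B' ⊂ B, f (flipB x B') = false) →
        c * Real.sqrt (B.card : ℝ) ≤ (N13 f : ℝ) := by
  classical
  refine ⟨1/10, by norm_num, ?_⟩
  intro n f x B hfx hfB hmin
  have hBne : B.Nonempty := by
    rcases Finset.eq_empty_or_nonempty B with h | h
    · exfalso; rw [h, flipB_empty, hfx] at hfB; exact Bool.false_ne_true hfB
    · exact h
  have hm1 : 1 ≤ B.card := Finset.card_pos.mpr hBne
  have hmR : (1:ℝ) ≤ B.card := by exact_mod_cast hm1
  have hmR0 : (0:ℝ) < B.card := by linarith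
  -- optimal polynomial
  obtain ⟨p, hp, hpd⟩ := Nat.sInf_mem (ndet_set_nonempty f)
  obtain ⟨D, hDdef⟩ : ∃ D : ℕ, D = N13 f := ⟨_, rfl⟩
  have hpdD : p.totalDegree ≤ D := by rw [hDdef]; exact hpd
  -- scaling
  obtain ⟨w, hw⟩ : ∃ w : ℝ, w = evalB p (flipB x B) := ⟨_, rfl⟩
  have hw1 : 1 ≤ |w| := by rw [hw]; exact (hp (flipB x B)).2 hfB
  have hw0 : w ≠ 0 := by intro h; rw [h] at hw1; simp at hw1; linarith
  obtain ⟨q, hq⟩ : ∃ q : MvPolynomial (Fin n) ℝ, q = w⁻¹ • ml p := ⟨_, rfl⟩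
  have hq_supp : ∀ d ∈ q.support, ∀ i, d i ≤ 1 := by
    intro d hd i
    rw [hq] at hd
    exact ml_support_le p d (Finsupp.support_smul hd) i
  have hq_deg : q.totalDegree ≤ D := by
    rw [hq]
    refine (MvPolynomial.totalDegree_smul_le _ _).trans ((totalDegree_ml_le p).trans hpdD)
  have hqval : ∀ z, evalB q z = w⁻¹ * evalB p z := by
    intro z
    rw [hq, evalB, MvPolynomial.smul_eq_C_mul, MvPolynomial.eval_mul, MvPolynomial.eval_C]
    rw [← evalB, evalB_ml]
  have hval1 : evalB q (flipB x B) = 1 := by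
    rw [hqval, ← hw, inv_mul_cancel₀ hw0]
  have hvalS : ∀ S ∈ B.powerset, S ≠ B → |evalB q (flipB x S)| ≤ 1/3 := by
    intro S hS hSB
    have hss : S ⊂ B := (Finset.ssubset_iff_subset_ne).mpr ⟨Finset.mem_powerset.mp hS, hSB⟩
    have hfS : f (flipB x S) = false := hmin S hss
    have h1 : |evalB p (flipB x S)| ≤ 1/3 := (hp (flipB x S)).1 hfS
    rw [hqval, abs_mul, abs_inv]
    calc |w|⁻¹ * |evalB p (flipB x S)| ≤ 1 * (1/3) := by
          apply mul_le_mul _ h1 (abs_nonneg _) (by norm_num)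
          rw [inv_le_one_iff₀]; right; exact hw1
      _ = 1/3 := by norm_num
  -- univariate polynomial
  obtain ⟨G, hG⟩ : ∃ G : Polynomial ℝ, G = MvPolynomial.aeval (subst B x) q := ⟨_, rfl⟩
  have hGdeg : G.natDegree ≤ D := by
    rw [hG]
    exact (natDegree_aeval_le _ (subst_natDegree_le B x) q).trans hq_deg
  have hGeval : ∀ t : ℝ, G.eval t
      = ∑ S ∈ B.powerset, t ^ S.card * (1 - t) ^ (B.card - S.card) * evalB q (flipB x S) := by
    intro t
    rw [hG, eval_subst, expect_eq q hq_supp t B x]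
  have hG1 : G.eval 1 = 1 := by
    rw [hG, eval_subst]
    have : mixPt B x 1 = fun i => bval ((flipB x B) i) := by
      funext i
      by_cases hi : i ∈ B <;> simp [mixPt, flipB, hi]
    rw [this, ← evalB, hval1]
  have hGt : ∀ t : ℝ, 0 ≤ t → t ≤ 1 → |G.eval t| ≤ 1/3 + 2/3 * t^B.card := by
    intro t ht0 ht1
    have hsum1 : ∑ S ∈ B.powerset, t ^ S.card * (1 - t) ^ (B.card - S.card) = 1 := by
      calc ∑ S ∈ B.powerset, t ^ S.card * (1 - t) ^ (B.card - S.card)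
          = ∑ S ∈ B.powerset, (∏ _i ∈ S, t) * ∏ _i ∈ B \ S, (1 - t) := by
            apply Finset.sum_congr rfl
            intro S hS
            rw [Finset.prod_const, Finset.prod_const,
              Finset.card_sdiff_of_subset (Finset.mem_powerset.mp hS)]
        _ = ∏ _i ∈ B, (t + (1 - t)) := (Finset.prod_add _ _ _).symm
        _ = 1 := by
            rw [Finset.prod_congr rfl (fun i _ => by ring_nf : ∀ i ∈ B, t + (1-t) = 1)]
            exact Finset.prod_const_one
    have hBmem : B ∈ B.powerset := Finset.mem_powerset_self B
    have h1t : (0:ℝ) ≤ 1 - t := by linarith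
    have hsplit : G.eval t = (∑ S ∈ B.powerset.erase B,
        t ^ S.card * (1 - t) ^ (B.card - S.card) * evalB q (flipB x S)) + t ^ B.card := by
      rw [hGeval]
      have h := Finset.sum_erase_add (B.powerset)
        (fun S => t ^ S.card * (1 - t) ^ (B.card - S.card) * evalB q (flipB x S)) hBmem
      rw [← h, hval1, Nat.sub_self, pow_zero]
      ring
    have h3 : ∑ S ∈ (B.powerset).erase B, t ^ S.card * (1 - t) ^ (B.card - S.card)
        = 1 - t^B.card := by
      have h := Finset.sum_erase_add (B.powerset)
        (fun S => t ^ S.card * (1 - t) ^ (B.card - S.card)) hBmem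
      rw [hsum1, Nat.sub_self, pow_zero] at h
      linarith
    have h2 : |∑ S ∈ (B.powerset).erase B,
        t ^ S.card * (1 - t) ^ (B.card - S.card) * evalB q (flipB x S)|
        ≤ ∑ S ∈ (B.powerset).erase B, t ^ S.card * (1 - t) ^ (B.card - S.card) * (1/3) := by
      refine (Finset.abs_sum_le_sum_abs _ _).trans ?_
      apply Finset.sum_le_sum
      intro S hS
      rw [abs_mul]
      have hw0' : 0 ≤ t ^ S.card * (1 - t) ^ (B.card - S.card) :=
        mul_nonneg (pow_nonneg ht0 _) (pow_nonneg h1t _)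
      rw [abs_of_nonneg hw0']
      exact mul_le_mul_of_nonneg_left
        (hvalS S (Finset.mem_of_mem_erase hS) (Finset.ne_of_mem_erase hS)) hw0'
    have h2' : ∑ S ∈ (B.powerset).erase B, t ^ S.card * (1 - t) ^ (B.card - S.card) * (1/3)
        = (1 - t^B.card) * (1/3) := by
      rw [← Finset.sum_mul, h3]
    have htm : (0:ℝ) ≤ t ^ B.card := pow_nonneg ht0 _
    rw [hsplit]
    calc |(∑ S ∈ B.powerset.erase B,
          t ^ S.card * (1 - t) ^ (B.card - S.card) * evalB q (flipB x S)) + t ^ B.card|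
        ≤ |∑ S ∈ B.powerset.erase B,
            t ^ S.card * (1 - t) ^ (B.card - S.card) * evalB q (flipB x S)| + |t ^ B.card| :=
          abs_add_le _ _
      _ ≤ (1 - t^B.card) * (1/3) + t ^ B.card := by
          rw [abs_of_nonneg htm]
          have := h2.trans (le_of_eq h2')
          linarith
      _ = 1/3 + 2/3 * t^B.card := by ring
  -- handle degree-zero case
  by_cases hD0 : D = 0
  · exfalso
    have hdeg0 : p.totalDegree = 0 := by omega
    have hconst : ∀ z z' : Fin n → Bool, evalB p z = evalB p z' := by
      intro z z'
      rw [evalB, evalB, MvPolynomial.eval_eq, MvPolynomial.eval_eq]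
      apply Finset.sum_congr rfl
      intro d hd
      have hd0 : d = 0 := by
        have h1 := MvPolynomial.le_totalDegree hd
        rw [hdeg0, Nat.le_zero] at h1
        ext i
        by_contra hi
        have hisupp : i ∈ d.support := Finsupp.mem_support_iff.mpr (by simpa using hi)
        have : 0 < ∑ j ∈ d.support, d j :=
          Finset.sum_pos' (fun j _ => Nat.zero_le _) ⟨i, hisupp, Nat.pos_of_ne_zero (by simpa using hi)⟩
        rw [Finsupp.sum] at h1
        omega
      subst hd0
      simp
    have h1 := (hp x).1 hfx
    have h2 := (hp (flipB x B)).2 hfB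
    rw [hconst x (flipB x B)] at h1
    linarith
  have hD1 : 1 ≤ D := Nat.one_le_iff_ne_zero.mpr hD0
  -- composed polynomial on [-1,1]
  obtain ⟨a, ha⟩ : ∃ a : ℝ, a = 1 - 1/(2*(B.card:ℝ)) := ⟨_, rfl⟩
  have hinv2m : 0 < 1/(2*(B.card:ℝ)) := by positivity
  have hinv2m' : 1/(2*(B.card:ℝ)) ≤ 1/2 := by
    apply div_le_div_of_nonneg_left (by norm_num) (by norm_num) (by linarith)
  have ha2 : (1:ℝ)/2 ≤ a := by rw [ha]; linarith
  have ha0 : (0:ℝ) < a := by linarith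
  have ha1 : a < 1 := by rw [ha]; linarith
  obtain ⟨h, hh⟩ : ∃ h : Polynomial ℝ,
      h = G.comp (Polynomial.C (a/2) * (Polynomial.X + 1)) := ⟨_, rfl⟩
  have hhdeg : h.natDegree ≤ D := by
    rw [hh]
    refine (Polynomial.natDegree_comp_le).trans ?_
    have hlin : (Polynomial.C (a/2) * (Polynomial.X + 1) : Polynomial ℝ).natDegree ≤ 1 := by
      refine (Polynomial.natDegree_mul_le).trans ?_
      have h2 : (Polynomial.X + 1 : Polynomial ℝ).natDegree ≤ 1 := by
        refine (Polynomial.natDegree_add_le _ _).trans ?_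
        simp [Polynomial.natDegree_X]
      simp only [Polynomial.natDegree_C, zero_add]
      exact h2
    calc G.natDegree * (Polynomial.C (a/2) * (Polynomial.X + 1)).natDegree
        ≤ G.natDegree * 1 := Nat.mul_le_mul_left _ hlin
      _ = G.natDegree := by omega
      _ ≤ D := hGdeg
  have hheval : ∀ s : ℝ, h.eval s = G.eval (a/2 * (s+1)) := by
    intro s
    rw [hh, Polynomial.eval_comp]
    congr 1
    simp [mul_add]
  obtain ⟨M, hM⟩ : ∃ M : ℝ, M = 1/3 + 2/3 * Real.exp (-(1/2 : ℝ)) := ⟨_, rfl⟩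
  have hexpam : a ^ B.card ≤ Real.exp (-(1/2 : ℝ)) := by
    have h1 : a ≤ Real.exp (-(1/(2*(B.card:ℝ)))) := by
      have := Real.add_one_le_exp (-(1/(2*(B.card:ℝ))))
      rw [ha]; linarith
    have h2 : a ^ B.card ≤ Real.exp (-(1/(2*(B.card:ℝ)))) ^ B.card :=
      pow_le_pow_left₀ ha0.le h1 _
    have h3 : Real.exp (-(1/(2*(B.card:ℝ)))) ^ B.card
        = Real.exp ((B.card : ℝ) * (-(1/(2*(B.card:ℝ))))) := (Real.exp_nat_mul _ _).symm
    have h4 : (B.card : ℝ) * (-(1/(2*(B.card:ℝ)))) = -(1/2 : ℝ) := by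
      field_simp
    rw [h3, h4] at h2
    exact h2
  have hhM : ∀ s : ℝ, -1 ≤ s → s ≤ 1 → |h.eval s| ≤ M := by
    intro s hs1 hs2
    rw [hheval]
    have ht0 : 0 ≤ a/2 * (s+1) := by nlinarith
    have hta : a/2 * (s+1) ≤ a := by nlinarith
    have ht1 : a/2 * (s+1) ≤ 1 := by linarith
    refine (hGt _ ht0 ht1).trans ?_
    rw [hM]
    have h5 : (a/2*(s+1)) ^ B.card ≤ a ^ B.card := pow_le_pow_left₀ ht0 hta _
    have h6 := h5.trans hexpam
    linarith
  -- evaluation at the outer point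
  obtain ⟨y, hy⟩ : ∃ y : ℝ, y = 2/a - 1 := ⟨_, rfl⟩
  have hy1 : 1 < y := by
    rw [hy]
    have : 2 < 2/a := by
      rw [lt_div_iff₀ ha0]; linarith
    linarith
  have hhy : h.eval y = 1 := by
    rw [hheval]
    have he : a/2 * (y+1) = 1 := by
      rw [hy]
      field_simp
      ring
    rw [he, hG1]
  -- chebyshev bound
  obtain ⟨u, hu⟩ : ∃ u : ℝ, u = 2 / Real.sqrt (B.card : ℝ) := ⟨_, rfl⟩
  have hs0 : 0 < Real.sqrt (B.card : ℝ) := Real.sqrt_pos.mpr hmR0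
  have hu0 : 0 < u := by rw [hu]; positivity
  have husq : u^2 = 4 / (B.card : ℝ) := by
    rw [hu, div_pow, Real.sq_sqrt (le_of_lt hmR0)]
    norm_num
  have hyu : y ≤ Real.cosh u := by
    have h1 : 1 + 2/(B.card:ℝ) ≤ Real.cosh u := by
      have h2 := cosh_quad (le_of_lt hu0)
      rw [husq] at h2
      have h3 : 4 / (B.card:ℝ) / 2 = 2/(B.card:ℝ) := by ring
      rw [h3] at h2
      exact h2
    refine le_trans ?_ h1
    have hBc : (0:ℝ) < (B.card:ℝ) := hmR0
    have hfrac : 2/a ≤ 2 + 2/(B.card:ℝ) := by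
      rw [div_le_iff₀ ha0, ha]
      have hexp : (2 + 2/(B.card:ℝ)) * (1 - 1/(2*(B.card:ℝ)))
          = 2 + 1/(B.card:ℝ) - 1/((B.card:ℝ)^2) := by
        field_simp
        ring
      rw [hexp]
      have h5 : 1/((B.card:ℝ)^2) ≤ 1/(B.card:ℝ) := by
        rw [div_le_div_iff₀ (by positivity) (by positivity)]
        nlinarith
      linarith
    rw [hy]
    linarith
  have hcheb := cheb_bound D hD1 h hhdeg M hhM y u hy1 hyu
  rw [hhy] at hcheb
  simp only [abs_one] at hcheb
  -- final numerics
  by_contra hcon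
  push_neg at hcon
  rw [← hDdef] at hcon
  have hDlt : (D:ℝ) < 1/10 * Real.sqrt (B.card:ℝ) := hcon
  have hDu : (D:ℝ) * u ≤ 1/5 := by
    have hinv : Real.sqrt (B.card:ℝ) * (Real.sqrt (B.card:ℝ))⁻¹ = 1 :=
      mul_inv_cancel₀ (ne_of_gt hs0)
    have hD' : (D:ℝ) ≤ Real.sqrt (B.card:ℝ) / 10 := by linarith
    calc (D:ℝ) * u = (D:ℝ) * 2 * (Real.sqrt (B.card:ℝ))⁻¹ := by rw [hu]; ring
      _ ≤ (Real.sqrt (B.card:ℝ) / 10) * 2 * (Real.sqrt (B.card:ℝ))⁻¹ := by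
          apply mul_le_mul_of_nonneg_right _ (by positivity)
          linarith
      _ = 1/5 * (Real.sqrt (B.card:ℝ) * (Real.sqrt (B.card:ℝ))⁻¹) := by ring
      _ = 1/5 := by rw [hinv]; ring
  have hM45 : M < 4/5 := by
    rw [hM]
    have := exp_neg_half
    linarith
  have hM0 : 0 ≤ M := by
    rw [hM]
    have := Real.exp_pos (-(1/2:ℝ))
    linarith
  have hchain : M * Real.cosh ((D:ℝ) * u) < 1 := by
    have h1 : Real.cosh ((D:ℝ) * u) ≤ Real.exp ((D:ℝ) * u) :=
      cosh_le_exp (by positivity)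
    have h2 : Real.exp ((D:ℝ) * u) ≤ Real.exp (1/5) := Real.exp_le_exp.mpr hDu
    have h3 : Real.exp (1/5) ≤ 5/4 := exp_fifth
    calc M * Real.cosh ((D:ℝ) * u) ≤ M * (5/4) := by
          apply mul_le_mul_of_nonneg_left _ hM0
          linarith
      _ < (4/5) * (5/4) := mul_lt_mul_of_pos_right hM45 (by norm_num)
      _ = 1 := by norm_num
  linarith
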